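/- Under the hypotheses of the linearity theorem, $R_H\big(\sum_{G \subseteq L} c_G^{(L)}(t) R_G(v)\big) = \sum_{G \subseteq L} c_G^{(L)}(t) R_{G \cup H}(v)$ for every $H \subseteq L$, $v$ a nonnegative measure on $X$, and $t \geq 0$. -/

import Mathlib

open Finset

variable {n : ℕ}

/-- Total mass of a population. -/
noncomputable def mass {X : Fin (n+1) → Type*} [∀ i, Fintype (X i)]
    (ω : (∀ i, X i) → ℝ) : ℝ := ∑ x, ω x

/-- Leading marginal `π_{<α}.ω`, encoded as a function on full types that only
depends on the coordinates at sites `≤ α`. -/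
noncomputable def margLe {X : Fin (n+1) → Type*} [∀ i, Fintype (X i)] [∀ i, DecidableEq (X i)]
    (α : Fin n) (ω : (∀ i, X i) → ℝ) : (∀ i, X i) → ℝ :=
  fun x => ∑ y, if ∀ i : Fin (n+1), (i : ℕ) ≤ (α : ℕ) → y i = x i then ω y else 0

/-- Trailing marginal `π_{>α}.ω`. -/
noncomputable def margGt {X : Fin (n+1) → Type*} [∀ i, Fintype (X i)] [∀ i, DecidableEq (X i)]
    (α : Fin n) (ω : (∀ i, X i) → ℝ) : (∀ i, X i) → ℝ :=
  fun x => ∑ y, if ∀ i : Fin (n+1), (α : ℕ) < (i : ℕ) → y i = x i then ω y else 0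

/-- Single-site marginal `π_i.ω`. -/
noncomputable def margAt {X : Fin (n+1) → Type*} [∀ i, Fintype (X i)] [∀ i, DecidableEq (X i)]
    (i : Fin (n+1)) (ω : (∀ i, X i) → ℝ) : (∀ i, X i) → ℝ :=
  fun x => ∑ y, if y i = x i then ω y else 0

/-- Elementary recombinator at link `α` (the link between sites `α` and `α+1`). -/
noncomputable def reco {X : Fin (n+1) → Type*} [∀ i, Fintype (X i)] [∀ i, DecidableEq (X i)]
    (α : Fin n) (ω : (∀ i, X i) → ℝ) : (∀ i, X i) → ℝ :=
  fun x => (mass ω)⁻¹ * (margLe α ω x * margGt α ω x)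

/-- Composite recombinator `R_G`: composition of the elementary recombinators over `G`. -/
noncomputable def recoSet {X : Fin (n+1) → Type*} [∀ i, Fintype (X i)] [∀ i, DecidableEq (X i)]
    (G : Finset (Fin n)) (ω : (∀ i, X i) → ℝ) : (∀ i, X i) → ℝ :=
  (G.sort (· ≤ ·)).foldr (fun α ω' => reco α ω') ω

section helpers

variable {X : Fin (n+1) → Type*} [∀ i, Fintype (X i)] [∀ i, DecidableEq (X i)]

/-- interval marginal over `(β, α]`. -/
noncomputable def margI (β α : Fin n) (ω : (∀ i, X i) → ℝ) : (∀ i, X i) → ℝ :=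
  fun x => ∑ y, if ∀ i : Fin (n+1), (β : ℕ) < (i : ℕ) → (i : ℕ) ≤ (α : ℕ) → y i = x i
    then ω y else 0

theorem ite_sum_zero {γ : Type*} (s : Finset γ) (P : Prop) [Decidable P] (f : γ → ℝ) :
    (if P then (∑ y ∈ s, f y) else 0) = ∑ y ∈ s, if P then f y else 0 := by
  by_cases h : P <;> simp [h]

theorem ite_ite_and (P Q : Prop) [Decidable P] [Decidable Q] (c : ℝ) :
    (if P then (if Q then c else 0) else 0) = if P ∧ Q then c else 0 := by
  by_cases h : P <;> by_cases h' : Q <;> simp [h, h']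

theorem sum_ite_point {γ : Type*} [Fintype γ] [DecidableEq γ] (y₀ : γ) (C : Prop) [Decidable C]
    (f : γ → ℝ) : ∑ y, (if y = y₀ ∧ C then f y else 0) = if C then f y₀ else 0 := by
  by_cases h : C
  · simp only [h, and_true, if_true]
    rw [Finset.sum_ite_eq' Finset.univ y₀ f, if_pos (Finset.mem_univ y₀)]
  · simp [h]

theorem sum_ite_cond_congr {γ : Type*} [Fintype γ] (P Q : γ → Prop) [DecidablePred P]
    [DecidablePred Q] (h : ∀ y, P y ↔ Q y) (f : γ → ℝ) :
    ∑ y, (if P y then f y else 0) = ∑ y, (if Q y then f y else 0) := by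
  apply Finset.sum_congr rfl
  intro y _
  exact if_congr (h y) rfl rfl

/-- dependence of margGt on coordinates above α only -/
theorem margGt_dep (α : Fin n) (ω : (∀ i, X i) → ℝ) (x x' : ∀ i, X i)
    (h : ∀ i : Fin (n+1), (α : ℕ) < (i : ℕ) → x i = x' i) :
    margGt α ω x = margGt α ω x' := by
  unfold margGt
  apply sum_ite_cond_congr
  intro y
  constructor
  · intro hy i hi; rw [hy i hi, h i hi]
  · intro hy i hi; rw [hy i hi, ← h i hi]

end helpers

set_option linter.unusedSectionVars false

section cores

variable {X : Fin (n+1) → Type*} [∀ i, Fintype (X i)] [∀ i, DecidableEq (X i)]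

theorem ite_mul_const (P : Prop) [Decidable P] (a b : ℝ) :
    (if P then a * b else 0) = (if P then a else 0) * b := by
  by_cases h : P <;> simp [h]

theorem const_mul_ite (P : Prop) [Decidable P] (a b : ℝ) :
    (if P then a * b else 0) = a * (if P then b else 0) := by
  by_cases h : P <;> simp [h]

/-- merge two configurations at link β -/
noncomputable def mergeB (β : Fin n) (z w : ∀ i, X i) : ∀ i, X i :=
  fun i => if (i : ℕ) ≤ (β : ℕ) then z i else w i

theorem mergeB_le {β : Fin n} {z w : ∀ i, X i} {i : Fin (n+1)} (h : (i : ℕ) ≤ (β : ℕ)) :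
    mergeB β z w i = z i := if_pos h

theorem mergeB_gt {β : Fin n} {z w : ∀ i, X i} {i : Fin (n+1)} (h : (β : ℕ) < (i : ℕ)) :
    mergeB β z w i = w i := if_neg (Nat.not_le.mpr h)

theorem merge_iff (β : Fin n) (y z w : ∀ i, X i) :
    ((∀ i : Fin (n+1), (i : ℕ) ≤ (β : ℕ) → z i = y i) ∧
      (∀ i : Fin (n+1), (β : ℕ) < (i : ℕ) → w i = y i)) ↔ y = mergeB β z w := by
  constructor
  · rintro ⟨h1, h2⟩
    funext i
    by_cases h : (i : ℕ) ≤ (β : ℕ)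
    · rw [mergeB_le h, h1 i h]
    · rw [mergeB_gt (Nat.lt_of_not_le h), h2 i (Nat.lt_of_not_le h)]
  · rintro rfl
    exact ⟨fun i hi => (mergeB_le hi).symm, fun i hi => (mergeB_gt hi).symm⟩

theorem sum_ite_margs (A : (∀ i, X i) → Prop) [DecidablePred A] (β : Fin n)
    (ω : (∀ i, X i) → ℝ) :
    ∑ y, (if A y then margLe β ω y * margGt β ω y else 0)
      = ∑ z, ∑ w, (if A (mergeB β z w) then ω z * ω w else 0) := by
  have expand : ∀ y, margLe β ω y * margGt β ω y
      = ∑ z, ∑ w, (if y = mergeB β z w then ω z * ω w else 0) := by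
    intro y
    rw [margLe, margGt, Finset.sum_mul_sum]
    apply Finset.sum_congr rfl; intro z _
    apply Finset.sum_congr rfl; intro w _
    rw [ite_zero_mul_ite_zero]
    exact if_congr (merge_iff β y z w) rfl rfl
  calc ∑ y, (if A y then margLe β ω y * margGt β ω y else 0)
      = ∑ y, ∑ z, ∑ w, (if A y then (if y = mergeB β z w then ω z * ω w else 0) else 0) := by
        apply Finset.sum_congr rfl; intro y _
        rw [expand y, ite_sum_zero]
        apply Finset.sum_congr rfl; intro z _
        rw [ite_sum_zero]
    _ = ∑ z, ∑ w, ∑ y, (if y = mergeB β z w then (if A y then ω z * ω w else 0) else 0) := by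
        rw [Finset.sum_comm]
        apply Finset.sum_congr rfl; intro z _
        rw [Finset.sum_comm]
        apply Finset.sum_congr rfl; intro w _
        apply Finset.sum_congr rfl; intro y _
        rw [ite_ite_and, ite_ite_and]
        exact if_congr and_comm rfl rfl
    _ = ∑ z, ∑ w, (if A (mergeB β z w) then ω z * ω w else 0) := by
        apply Finset.sum_congr rfl; intro z _
        apply Finset.sum_congr rfl; intro w _
        rw [Finset.sum_ite_eq' Finset.univ (mergeB β z w) (fun y => if A y then ω z * ω w else 0),
          if_pos (Finset.mem_univ _)]

/-- Core A -/
theorem sum_margLe_mul_margGt (α : Fin n) (ω : (∀ i, X i) → ℝ) :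
    ∑ x, margLe α ω x * margGt α ω x = mass ω * mass ω := by
  have h : ∑ x, margLe α ω x * margGt α ω x
      = ∑ x : (∀ i, X i), (if True then margLe α ω x * margGt α ω x else 0) := by
    simp
  rw [h, sum_ite_margs (fun _ => True) α ω]
  simp [mass, Finset.sum_mul_sum]

theorem mass_reco (α : Fin n) (ω : (∀ i, X i) → ℝ) : mass (reco α ω) = mass ω := by
  have : mass (reco α ω) = (mass ω)⁻¹ * (mass ω * mass ω) := by
    rw [mass]
    simp only [reco]
    rw [← Finset.mul_sum, sum_margLe_mul_margGt]
  rw [this]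
  by_cases hm : mass ω = 0
  · simp [hm]
  · field_simp

/-- Core B -/
theorem margLe_reco_ge (α β : Fin n) (hαβ : (α : ℕ) ≤ (β : ℕ)) (ω : (∀ i, X i) → ℝ) :
    margLe α (reco β ω) = fun x => (mass ω)⁻¹ * mass ω * margLe α ω x := by
  funext x
  have e1 : margLe α (reco β ω) x = (mass ω)⁻¹ *
      ∑ y, (if ∀ i : Fin (n+1), (i : ℕ) ≤ (α : ℕ) → y i = x i
        then margLe β ω y * margGt β ω y else 0) := by
    rw [margLe, Finset.mul_sum]
    apply Finset.sum_congr rfl; intro y _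
    rw [reco]
    by_cases h : ∀ i : Fin (n+1), (i : ℕ) ≤ (α : ℕ) → y i = x i <;> simp [h]
  rw [e1, sum_ite_margs]
  have e2 : ∀ z w : ∀ i, X i,
      (if ∀ i : Fin (n+1), (i : ℕ) ≤ (α : ℕ) → mergeB β z w i = x i then ω z * ω w else 0)
      = (if ∀ i : Fin (n+1), (i : ℕ) ≤ (α : ℕ) → z i = x i then ω z else 0) * ω w := by
    intro z w
    rw [← ite_mul_const]
    apply if_congr _ rfl rfl
    constructor
    · intro h i hi; have := h i hi; rwa [mergeB_le (le_trans hi hαβ)] at this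
    · intro h i hi; rw [mergeB_le (le_trans hi hαβ)]; exact h i hi
  simp only [e2]
  rw [← Finset.sum_mul_sum]
  rw [show (∑ z, if ∀ i : Fin (n+1), (i : ℕ) ≤ (α : ℕ) → z i = x i then ω z else 0)
    = margLe α ω x from rfl, show (∑ w : ∀ i, X i, ω w) = mass ω from rfl]
  ring

/-- Core C -/
theorem margGt_reco_le (α β : Fin n) (hβα : (β : ℕ) ≤ (α : ℕ)) (ω : (∀ i, X i) → ℝ) :
    margGt α (reco β ω) = fun x => (mass ω)⁻¹ * mass ω * margGt α ω x := by
  funext x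
  have e1 : margGt α (reco β ω) x = (mass ω)⁻¹ *
      ∑ y, (if ∀ i : Fin (n+1), (α : ℕ) < (i : ℕ) → y i = x i
        then margLe β ω y * margGt β ω y else 0) := by
    rw [margGt, Finset.mul_sum]
    apply Finset.sum_congr rfl; intro y _
    rw [reco]
    by_cases h : ∀ i : Fin (n+1), (α : ℕ) < (i : ℕ) → y i = x i <;> simp [h]
  rw [e1, sum_ite_margs]
  have e2 : ∀ z w : ∀ i, X i,
      (if ∀ i : Fin (n+1), (α : ℕ) < (i : ℕ) → mergeB β z w i = x i then ω z * ω w else 0)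
      = ω z * (if ∀ i : Fin (n+1), (α : ℕ) < (i : ℕ) → w i = x i then ω w else 0) := by
    intro z w
    rw [← const_mul_ite]
    apply if_congr _ rfl rfl
    constructor
    · intro h i hi; have := h i hi; rwa [mergeB_gt (lt_of_le_of_lt hβα hi)] at this
    · intro h i hi; rw [mergeB_gt (lt_of_le_of_lt hβα hi)]; exact h i hi
  simp only [e2]
  rw [← Finset.sum_mul_sum]
  rw [show (∑ w, if ∀ i : Fin (n+1), (α : ℕ) < (i : ℕ) → w i = x i then ω w else 0)
    = margGt α ω x from rfl, show (∑ z : ∀ i, X i, ω z) = mass ω from rfl]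
  ring

/-- Core D -/
theorem margLe_reco_le (α β : Fin n) (hβα : (β : ℕ) ≤ (α : ℕ)) (ω : (∀ i, X i) → ℝ) :
    margLe α (reco β ω) = fun x => (mass ω)⁻¹ * (margLe β ω x * margI β α ω x) := by
  funext x
  have e1 : margLe α (reco β ω) x = (mass ω)⁻¹ *
      ∑ y, (if ∀ i : Fin (n+1), (i : ℕ) ≤ (α : ℕ) → y i = x i
        then margLe β ω y * margGt β ω y else 0) := by
    rw [margLe, Finset.mul_sum]
    apply Finset.sum_congr rfl; intro y _
    rw [reco]
    by_cases h : ∀ i : Fin (n+1), (i : ℕ) ≤ (α : ℕ) → y i = x i <;> simp [h]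
  rw [e1, sum_ite_margs]
  have e2 : ∀ z w : ∀ i, X i,
      (if ∀ i : Fin (n+1), (i : ℕ) ≤ (α : ℕ) → mergeB β z w i = x i then ω z * ω w else 0)
      = (if ∀ i : Fin (n+1), (i : ℕ) ≤ (β : ℕ) → z i = x i then ω z else 0) *
        (if ∀ i : Fin (n+1), (β : ℕ) < (i : ℕ) → (i : ℕ) ≤ (α : ℕ) → w i = x i
          then ω w else 0) := by
    intro z w
    rw [ite_zero_mul_ite_zero]
    apply if_congr _ rfl rfl
    constructor
    · intro h
      constructor
      · intro i hi; have := h i (le_trans hi hβα); rwa [mergeB_le hi] at this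
      · intro i hi1 hi2; have := h i hi2; rwa [mergeB_gt hi1] at this
    · rintro ⟨h1, h2⟩ i hi
      by_cases hb : (i : ℕ) ≤ (β : ℕ)
      · rw [mergeB_le hb]; exact h1 i hb
      · rw [mergeB_gt (Nat.lt_of_not_le hb)]; exact h2 i (Nat.lt_of_not_le hb) hi
  simp only [e2]
  rw [← Finset.sum_mul_sum]
  rfl

/-- Core E -/
theorem sum_gt_margLe (α β : Fin n) (hβα : (β : ℕ) ≤ (α : ℕ)) (ω : (∀ i, X i) → ℝ)
    (x : ∀ i, X i) :
    ∑ y, (if ∀ i : Fin (n+1), (β : ℕ) < (i : ℕ) → y i = x i then margLe α ω y else 0)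
      = margI β α ω x := by
  have step : ∀ y, (if ∀ i : Fin (n+1), (β : ℕ) < (i : ℕ) → y i = x i
      then margLe α ω y else 0)
      = ∑ z, (if (y = mergeB α z x ∧ ∀ i : Fin (n+1), (β : ℕ) < (i : ℕ) →
          (i : ℕ) ≤ (α : ℕ) → z i = x i) then ω z else 0) := by
    intro y
    rw [margLe, ite_sum_zero]
    apply Finset.sum_congr rfl; intro z _
    rw [ite_ite_and]
    apply if_congr _ rfl rfl
    constructor
    · rintro ⟨hA, hB⟩
      constructor
      · funext i
        by_cases hi : (i : ℕ) ≤ (α : ℕ)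
        · rw [mergeB_le hi, ← hB i hi]
        · rw [mergeB_gt (Nat.lt_of_not_le hi), hA i (lt_of_le_of_lt hβα (Nat.lt_of_not_le hi))]
      · intro i hi1 hi2
        rw [hB i hi2, hA i hi1]
    · rintro ⟨rfl, hC⟩
      constructor
      · intro i hi
        by_cases h2 : (i : ℕ) ≤ (α : ℕ)
        · rw [mergeB_le h2]; exact hC i hi h2
        · exact mergeB_gt (Nat.lt_of_not_le h2)
      · intro i hi
        exact (mergeB_le hi).symm
  simp only [step]
  rw [Finset.sum_comm]
  rw [margI]
  apply Finset.sum_congr rfl; intro z _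
  exact sum_ite_point (mergeB α z x) _ _

/-- Core G -/
theorem sum_out_margLe (α β : Fin n) (hβα : (β : ℕ) ≤ (α : ℕ)) (ω : (∀ i, X i) → ℝ)
    (x : ∀ i, X i) :
    ∑ y, (if ∀ i : Fin (n+1), ((i : ℕ) ≤ (β : ℕ) ∨ (α : ℕ) < (i : ℕ)) → y i = x i
      then margLe α ω y else 0) = margLe β ω x := by
  have step : ∀ y, (if ∀ i : Fin (n+1), ((i : ℕ) ≤ (β : ℕ) ∨ (α : ℕ) < (i : ℕ)) → y i = x i
      then margLe α ω y else 0)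
      = ∑ z, (if (y = mergeB α z x ∧ ∀ i : Fin (n+1), (i : ℕ) ≤ (β : ℕ) → z i = x i)
          then ω z else 0) := by
    intro y
    rw [margLe, ite_sum_zero]
    apply Finset.sum_congr rfl; intro z _
    rw [ite_ite_and]
    apply if_congr _ rfl rfl
    constructor
    · rintro ⟨hA, hB⟩
      constructor
      · funext i
        by_cases hi : (i : ℕ) ≤ (α : ℕ)
        · rw [mergeB_le hi, ← hB i hi]
        · rw [mergeB_gt (Nat.lt_of_not_le hi), hA i (Or.inr (Nat.lt_of_not_le hi))]
      · intro i hi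
        rw [hB i (le_trans hi hβα), hA i (Or.inl hi)]
    · rintro ⟨rfl, hC⟩
      constructor
      · intro i hi
        rcases hi with hi | hi
        · rw [mergeB_le (le_trans hi hβα)]; exact hC i hi
        · exact mergeB_gt hi
      · intro i hi
        exact (mergeB_le hi).symm
  simp only [step]
  rw [Finset.sum_comm]
  rw [margLe]
  apply Finset.sum_congr rfl; intro z _
  exact sum_ite_point (mergeB α z x) _ _

end cores

section structural

variable {X : Fin (n+1) → Type*} [∀ i, Fintype (X i)] [∀ i, DecidableEq (X i)]

theorem mass_foldr (l : List (Fin n)) (ω : (∀ i, X i) → ℝ) :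
    mass (l.foldr (fun α ω' => reco α ω') ω) = mass ω := by
  induction l with
  | nil => rfl
  | cons β l ih => rw [List.foldr_cons, mass_reco, ih]

theorem margLe_foldr_gt (α : Fin n) (l : List (Fin n)) (hl : ∀ β ∈ l, (α : ℕ) ≤ (β : ℕ))
    (ω : (∀ i, X i) → ℝ) (hm : mass ω ≠ 0) :
    margLe α (l.foldr (fun a ω' => reco a ω') ω) = margLe α ω := by
  induction l with
  | nil => rfl
  | cons β l ih =>
    rw [List.foldr_cons, margLe_reco_ge α β (hl β List.mem_cons_self), mass_foldr,
      inv_mul_cancel₀ hm]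
    simp only [one_mul]
    exact ih (fun b hb => hl b (List.mem_cons_of_mem β hb))

theorem margGt_foldr_le (α : Fin n) (l : List (Fin n)) (hl : ∀ β ∈ l, (β : ℕ) ≤ (α : ℕ))
    (ω : (∀ i, X i) → ℝ) (hm : mass ω ≠ 0) :
    margGt α (l.foldr (fun a ω' => reco a ω') ω) = margGt α ω := by
  induction l with
  | nil => rfl
  | cons β l ih =>
    rw [List.foldr_cons, margGt_reco_le α β (hl β List.mem_cons_self), mass_foldr,
      inv_mul_cancel₀ hm]
    simp only [one_mul]
    exact ih (fun b hb => hl b (List.mem_cons_of_mem β hb))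

theorem margLe_reco_congr (α β : Fin n) (hβα : (β : ℕ) ≤ (α : ℕ))
    (u u' : (∀ i, X i) → ℝ) (h1 : margLe α u = margLe α u') (h2 : mass u = mass u') :
    margLe α (reco β u) = margLe α (reco β u') := by
  have hLe : margLe β u = margLe β u' := by
    funext x
    rw [← sum_out_margLe α β hβα u x, ← sum_out_margLe α β hβα u' x, h1]
  have hI : margI β α u = margI β α u' := by
    funext x
    rw [← sum_gt_margLe α β hβα u x, ← sum_gt_margLe α β hβα u' x, h1]
  rw [margLe_reco_le α β hβα, margLe_reco_le α β hβα, h2, hLe, hI]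

theorem margLe_foldr_congr (α : Fin n) (l : List (Fin n)) (hl : ∀ β ∈ l, (β : ℕ) ≤ (α : ℕ))
    (u u' : (∀ i, X i) → ℝ) (h1 : margLe α u = margLe α u') (h2 : mass u = mass u') :
    margLe α (l.foldr (fun a ω' => reco a ω') u) = margLe α (l.foldr (fun a ω' => reco a ω') u') := by
  induction l with
  | nil => exact h1
  | cons β l ih =>
    rw [List.foldr_cons, List.foldr_cons]
    apply margLe_reco_congr α β (hl β List.mem_cons_self)
    · exact ih (fun b hb => hl b (List.mem_cons_of_mem β hb))
    · rw [mass_foldr, mass_foldr, h2]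

theorem margGt_of_inv (α β : Fin n) (hβα : (β : ℕ) ≤ (α : ℕ)) (U : (∀ i, X i) → ℝ) (M : ℝ)
    (hU : ∀ y, U y = M * (margLe α U y * margGt α U y)) (x : ∀ i, X i) :
    margGt β U x = M * (margI β α U x * margGt α U x) := by
  have step : ∀ y : ∀ i, X i,
      (if ∀ i : Fin (n+1), (β : ℕ) < (i : ℕ) → y i = x i then U y else 0)
      = M * margGt α U x * (if ∀ i : Fin (n+1), (β : ℕ) < (i : ℕ) → y i = x i
          then margLe α U y else 0) := by
    intro y
    by_cases h : ∀ i : Fin (n+1), (β : ℕ) < (i : ℕ) → y i = x i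
    · rw [if_pos h, if_pos h, hU y,
        margGt_dep α U y x (fun i hi => h i (lt_of_le_of_lt hβα hi))]
      ring
    · simp [h]
  rw [margGt]
  simp only [step]
  rw [← Finset.mul_sum, sum_gt_margLe α β hβα]
  ring

theorem inv_reco (α : Fin n) (u : (∀ i, X i) → ℝ) (hm : mass u ≠ 0) :
    reco α u = fun x => (mass (reco α u))⁻¹ *
      (margLe α (reco α u) x * margGt α (reco α u) x) := by
  rw [mass_reco, margLe_reco_ge α α le_rfl, margGt_reco_le α α le_rfl,
    inv_mul_cancel₀ hm]
  funext x
  rw [reco]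
  ring

theorem inv_foldr (α : Fin n) (l : List (Fin n)) (hl : ∀ β ∈ l, (β : ℕ) ≤ (α : ℕ))
    (u : (∀ i, X i) → ℝ) (hm : mass u ≠ 0)
    (hInv : u = fun x => (mass u)⁻¹ * (margLe α u x * margGt α u x)) :
    l.foldr (fun a ω' => reco a ω') u = fun x => (mass u)⁻¹ *
      (margLe α (l.foldr (fun a ω' => reco a ω') u) x *
        margGt α (l.foldr (fun a ω' => reco a ω') u) x) := by
  induction l with
  | nil => exact hInv
  | cons β l ih =>
    have hβ : (β : ℕ) ≤ (α : ℕ) := hl β List.mem_cons_self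
    set U := l.foldr (fun a ω' => reco a ω') u with hUdef
    have hMU : mass U = mass u := mass_foldr l u
    have hIH : U = fun x => (mass u)⁻¹ * (margLe α U x * margGt α U x) :=
      ih (fun b hb => hl b (List.mem_cons_of_mem β hb))
    have hUy : ∀ y, U y = (mass u)⁻¹ * (margLe α U y * margGt α U y) := by
      intro y; conv_lhs => rw [hIH]
    rw [List.foldr_cons, ← hUdef]
    funext x
    rw [margLe_reco_le α β hβ, margGt_reco_le α β hβ, reco, hMU,
      margGt_of_inv α β hβ U (mass u)⁻¹ hUy x, inv_mul_cancel₀ hm]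
    ring

theorem sort_union_split (A B : Finset (Fin n)) (h : ∀ a ∈ A, ∀ b ∈ B, (a : ℕ) < (b : ℕ)) :
    (A ∪ B).sort (· ≤ ·) = A.sort (· ≤ ·) ++ B.sort (· ≤ ·) := by
  have hd : Disjoint A B := by
    rw [Finset.disjoint_left]
    intro a ha hb
    exact absurd rfl (Nat.ne_of_lt (h a ha a hb))
  apply List.Perm.eq_of_pairwise' (Finset.pairwise_sort _ _)
  · rw [List.pairwise_append]
    refine ⟨Finset.pairwise_sort _ _, Finset.pairwise_sort _ _, ?_⟩
    intro a ha b hb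
    exact le_of_lt (Fin.lt_def.mpr (h a (Finset.mem_sort _ |>.mp ha) b (Finset.mem_sort _ |>.mp hb)))
  · rw [← Multiset.coe_eq_coe]
    rw [← Multiset.coe_add]  -- may need direction fix
    rw [Finset.sort_eq, Finset.sort_eq, Finset.sort_eq]
    rw [← Finset.disjUnion_eq_union A B hd]
    rfl

theorem recoSet_union (A B : Finset (Fin n)) (h : ∀ a ∈ A, ∀ b ∈ B, (a : ℕ) < (b : ℕ))
    (ω : (∀ i, X i) → ℝ) :
    recoSet (A ∪ B) ω = recoSet A (recoSet B ω) := by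
  rw [recoSet, recoSet, recoSet, sort_union_split A B h, List.foldr_append]

theorem mass_recoSet (G : Finset (Fin n)) (ω : (∀ i, X i) → ℝ) :
    mass (recoSet G ω) = mass ω := mass_foldr _ ω

theorem sum_powerset_split {M : Type*} [AddCommMonoid M] (L1 L2 : Finset (Fin n))
    (hd : Disjoint L1 L2) (f : Finset (Fin n) → M) :
    ∑ G ∈ (L1 ∪ L2).powerset, f G = ∑ G1 ∈ L1.powerset, ∑ G2 ∈ L2.powerset, f (G1 ∪ G2) := by
  rw [← Finset.sum_product']
  apply Finset.sum_nbij' (fun G => (G ∩ L1, G ∩ L2)) (fun p => p.1 ∪ p.2)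
  · intro G hG
    simp only [Finset.mem_product, Finset.mem_powerset] at *
    exact ⟨Finset.inter_subset_right, Finset.inter_subset_right⟩
  · intro p hp
    simp only [Finset.mem_product, Finset.mem_powerset] at *
    exact Finset.union_subset_union hp.1 hp.2
  · intro G hG
    simp only [Finset.mem_powerset] at hG
    rw [← Finset.inter_union_distrib_left, Finset.inter_eq_left.mpr hG]
  · intro p hp
    simp only [Finset.mem_product, Finset.mem_powerset] at hp
    have h1 : (p.1 ∪ p.2) ∩ L1 = p.1 := by
      ext a
      simp only [Finset.mem_inter, Finset.mem_union]
      constructor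
      · rintro ⟨ha | ha, haL⟩
        · exact ha
        · exact absurd haL (Finset.disjoint_right.mp hd (hp.2 ha))
      · intro ha; exact ⟨Or.inl ha, hp.1 ha⟩
    have h2 : (p.1 ∪ p.2) ∩ L2 = p.2 := by
      ext a
      simp only [Finset.mem_inter, Finset.mem_union]
      constructor
      · rintro ⟨ha | ha, haL⟩
        · exact absurd haL (Finset.disjoint_left.mp hd (hp.1 ha))
        · exact ha
      · intro ha; exact ⟨Or.inr ha, hp.2 ha⟩
    rw [Prod.ext_iff]
    exact ⟨h1, h2⟩
  · intro G hG
    simp only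
    rw [← Finset.inter_union_distrib_left, Finset.inter_eq_left.mpr (Finset.mem_powerset.mp hG)]

theorem margLe_sum {ι : Type*} (α : Fin n) (s : Finset ι) (a : ι → ℝ)
    (u : ι → (∀ i, X i) → ℝ) :
    margLe α (fun x => ∑ i ∈ s, a i * u i x) = fun x => ∑ i ∈ s, a i * margLe α (u i) x := by
  funext x
  rw [margLe]
  calc ∑ y, (if ∀ i : Fin (n+1), (i : ℕ) ≤ (α : ℕ) → y i = x i
        then ∑ i ∈ s, a i * u i y else 0)
      = ∑ y, ∑ i ∈ s, (if ∀ i : Fin (n+1), (i : ℕ) ≤ (α : ℕ) → y i = x i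
          then a i * u i y else 0) := by
        apply Finset.sum_congr rfl; intro y _; rw [ite_sum_zero]
    _ = ∑ i ∈ s, ∑ y, (if ∀ i : Fin (n+1), (i : ℕ) ≤ (α : ℕ) → y i = x i
          then a i * u i y else 0) := Finset.sum_comm
    _ = ∑ i ∈ s, a i * margLe α (u i) x := by
        apply Finset.sum_congr rfl; intro i _
        rw [margLe, Finset.mul_sum]
        apply Finset.sum_congr rfl; intro y _
        rw [const_mul_ite]

theorem margGt_sum {ι : Type*} (α : Fin n) (s : Finset ι) (a : ι → ℝ)
    (u : ι → (∀ i, X i) → ℝ) :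
    margGt α (fun x => ∑ i ∈ s, a i * u i x) = fun x => ∑ i ∈ s, a i * margGt α (u i) x := by
  funext x
  rw [margGt]
  calc ∑ y, (if ∀ i : Fin (n+1), (α : ℕ) < (i : ℕ) → y i = x i
        then ∑ i ∈ s, a i * u i y else 0)
      = ∑ y, ∑ i ∈ s, (if ∀ i : Fin (n+1), (α : ℕ) < (i : ℕ) → y i = x i
          then a i * u i y else 0) := by
        apply Finset.sum_congr rfl; intro y _; rw [ite_sum_zero]
    _ = ∑ i ∈ s, ∑ y, (if ∀ i : Fin (n+1), (α : ℕ) < (i : ℕ) → y i = x i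
          then a i * u i y else 0) := Finset.sum_comm
    _ = ∑ i ∈ s, a i * margGt α (u i) x := by
        apply Finset.sum_congr rfl; intro i _
        rw [margGt, Finset.mul_sum]
        apply Finset.sum_congr rfl; intro y _
        rw [const_mul_ite]

theorem mass_sum {ι : Type*} (s : Finset ι) (a : ι → ℝ) (u : ι → (∀ i, X i) → ℝ) :
    mass (fun x => ∑ i ∈ s, a i * u i x) = ∑ i ∈ s, a i * mass (u i) := by
  rw [mass, Finset.sum_comm]
  apply Finset.sum_congr rfl; intro i _
  rw [mass, Finset.mul_sum]

end structural

section K1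

variable {X : Fin (n+1) → Type*} [∀ i, Fintype (X i)] [∀ i, DecidableEq (X i)]

theorem recoSet_singleton (α : Fin n) (ω : (∀ i, X i) → ℝ) :
    recoSet {α} ω = reco α ω := by
  rw [recoSet, Finset.sort_singleton]
  rfl

theorem margLe_reco_self (α : Fin n) (u : (∀ i, X i) → ℝ) (hm : mass u ≠ 0) :
    margLe α (reco α u) = margLe α u := by
  rw [margLe_reco_ge α α le_rfl, inv_mul_cancel₀ hm]
  simp

theorem margGt_reco_self (α : Fin n) (u : (∀ i, X i) → ℝ) (hm : mass u ≠ 0) :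
    margGt α (reco α u) = margGt α u := by
  rw [margGt_reco_le α α le_rfl, inv_mul_cancel₀ hm]
  simp

theorem erase_lt (α : Fin n) (A : Finset (Fin n)) (hA : ∀ β ∈ A, (β : ℕ) ≤ (α : ℕ)) :
    ∀ β ∈ A.erase α, ∀ b ∈ ({α} : Finset (Fin n)), (β : ℕ) < (b : ℕ) := by
  intro β hβ b hb
  rw [Finset.mem_singleton] at hb
  subst hb
  rcases Finset.mem_erase.mp hβ with ⟨hne, hmem⟩
  exact lt_of_le_of_ne (hA β hmem) (fun h => hne (Fin.val_injective h))

theorem margLe_recoSet_erase (α : Fin n) (A : Finset (Fin n))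
    (hA : ∀ β ∈ A, (β : ℕ) ≤ (α : ℕ)) (v : (∀ i, X i) → ℝ) (hm : mass v ≠ 0) :
    margLe α (recoSet (A.erase α) (reco α v)) = margLe α (recoSet A v) := by
  by_cases hα : α ∈ A
  · have hAeq : A = (A.erase α) ∪ {α} := by
      rw [Finset.union_comm, ← Finset.insert_eq, Finset.insert_erase hα]
    conv_rhs => rw [hAeq]
    rw [recoSet_union _ _ (erase_lt α A hA) v, recoSet_singleton]
  · rw [Finset.erase_eq_of_notMem hα]
    have h1 : margLe α (reco α v) = margLe α v := margLe_reco_self α v hm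
    have h2 : mass (reco α v) = mass v := mass_reco α v
    exact margLe_foldr_congr α (A.sort (· ≤ ·))
      (fun β hβ => hA β ((Finset.mem_sort _).mp hβ)) _ _ h1 h2

theorem K1 (α : Fin n) (v : (∀ i, X i) → ℝ) (hm : mass v ≠ 0) (A B : Finset (Fin n))
    (hA : ∀ β ∈ A, (β : ℕ) ≤ (α : ℕ)) (hB : ∀ β ∈ B, (α : ℕ) < (β : ℕ)) :
    recoSet (A ∪ B ∪ {α}) v = fun x => (mass v)⁻¹ *
      (margLe α (recoSet A v) x * margGt α (recoSet B v) x) := by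
  set u := recoSet B v with hu
  have hmu : mass u = mass v := mass_recoSet B v
  have hmu' : mass u ≠ 0 := by rw [hmu]; exact hm
  -- reorganize the union
  have hset : A ∪ B ∪ {α} = ((A.erase α) ∪ {α}) ∪ B := by
    ext b
    simp only [Finset.mem_union, Finset.mem_singleton, Finset.mem_erase]
    by_cases hb : b = α <;> simp [hb] <;> tauto

  have hsep1 : ∀ a ∈ (A.erase α) ∪ {α}, ∀ b ∈ B, (a : ℕ) < (b : ℕ) := by
    intro a ha b hb
    rcases Finset.mem_union.mp ha with ha | ha
    · exact lt_of_le_of_lt (hA a (Finset.mem_of_mem_erase ha)) (hB b hb)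
    · rw [Finset.mem_singleton] at ha; subst ha; exact hB b hb
  rw [hset, recoSet_union _ _ hsep1 v, ← hu,
    recoSet_union _ _ (erase_lt α A hA) u, recoSet_singleton]
  -- now LHS = recoSet (A.erase α) (reco α u)
  have hmr : mass (reco α u) = mass v := by rw [mass_reco, hmu]
  have hmr' : mass (reco α u) ≠ 0 := by rw [hmr]; exact hm
  have hlist : ∀ β ∈ (A.erase α).sort (· ≤ ·), (β : ℕ) ≤ (α : ℕ) :=
    fun β hβ => hA β (Finset.mem_of_mem_erase ((Finset.mem_sort _).mp hβ))
  have hInv := inv_reco α u hmu'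
  have hfold := inv_foldr α ((A.erase α).sort (· ≤ ·)) hlist (reco α u) hmr' (by
    rw [mass_reco] at hInv ⊢
    exact hInv)
  rw [mass_reco, hmu] at hfold
  -- identify the two marginals
  have hGt : margGt α (((A.erase α).sort (· ≤ ·)).foldr (fun a ω' => reco a ω') (reco α u))
      = margGt α (recoSet B v) := by
    rw [margGt_foldr_le α _ hlist (reco α u) hmr', margGt_reco_self α u hmu', hu]
  have hLe : margLe α (((A.erase α).sort (· ≤ ·)).foldr (fun a ω' => reco a ω') (reco α u))
      = margLe α (recoSet A v) := by
    have htrans : margLe α (reco α u) = margLe α (reco α v) := by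
      rw [margLe_reco_self α u hmu', margLe_reco_self α v hm, hu]
      exact margLe_foldr_gt α (B.sort (· ≤ ·))
        (fun β hβ => le_of_lt (hB β ((Finset.mem_sort _).mp hβ))) v hm
    have hmass2 : mass (reco α u) = mass (reco α v) := by rw [mass_reco, mass_reco, hmu]
    have := margLe_foldr_congr α ((A.erase α).sort (· ≤ ·)) hlist (reco α u) (reco α v)
      htrans hmass2
    rw [this]
    exact margLe_recoSet_erase α A hA v hm
  show recoSet (A.erase α) (reco α u) = _
  rw [recoSet, hfold, hGt, hLe]

end K1

set_option linter.unreachableTactic false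
set_option linter.unusedTactic false

section SL

variable {X : Fin (n+1) → Type*} [∀ i, Fintype (X i)] [∀ i, DecidableEq (X i)]

theorem SL (α : Fin n) (v : (∀ i, X i) → ℝ) (hm : mass v ≠ 0) {I J : Type*}
    (s : Finset I) (r : Finset J) (a : I → ℝ) (b : J → ℝ)
    (A : I → Finset (Fin n)) (B : J → Finset (Fin n))
    (hA : ∀ i ∈ s, ∀ β ∈ A i, (β : ℕ) ≤ (α : ℕ))
    (hB : ∀ j ∈ r, ∀ β ∈ B j, (α : ℕ) < (β : ℕ))
    (ha : ∑ i ∈ s, a i = 1) (hb : ∑ j ∈ r, b j = 1) :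
    reco α (fun x => ∑ i ∈ s, a i * ∑ j ∈ r, b j * recoSet (A i ∪ B j) v x)
      = fun x => ∑ i ∈ s, a i * ∑ j ∈ r, b j * recoSet (A i ∪ B j ∪ {α}) v x := by
  have hsep : ∀ i ∈ s, ∀ j ∈ r, ∀ p ∈ A i, ∀ q ∈ B j, (p : ℕ) < (q : ℕ) :=
    fun i hi j hj p hp q hq => lt_of_le_of_lt (hA i hi p hp) (hB j hj q hq)
  -- the three statistics of w
  have hmassBj : ∀ j ∈ r, mass (recoSet (B j) v) = mass v := fun j _ => mass_recoSet _ v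
  have hmassAB : ∀ i ∈ s, ∀ j ∈ r, mass (recoSet (A i ∪ B j) v) = mass v :=
    fun i _ j _ => mass_recoSet _ v
  have hLeBj : ∀ j ∈ r, margLe α (recoSet (B j) v) = margLe α v := by
    intro j hj
    exact margLe_foldr_gt α ((B j).sort (· ≤ ·))
      (fun β hβ => le_of_lt (hB j hj β ((Finset.mem_sort _).mp hβ))) v hm
  have hLeAB : ∀ i ∈ s, ∀ j ∈ r,
      margLe α (recoSet (A i ∪ B j) v) = margLe α (recoSet (A i) v) := by
    intro i hi j hj
    rw [recoSet_union _ _ (fun p hp q hq => hsep i hi j hj p hp q hq) v]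
    exact margLe_foldr_congr α ((A i).sort (· ≤ ·))
      (fun β hβ => hA i hi β ((Finset.mem_sort _).mp hβ)) _ _ (hLeBj j hj)
      (hmassBj j hj)
  have hGtAB : ∀ i ∈ s, ∀ j ∈ r,
      margGt α (recoSet (A i ∪ B j) v) = margGt α (recoSet (B j) v) := by
    intro i hi j hj
    rw [recoSet_union _ _ (fun p hp q hq => hsep i hi j hj p hp q hq) v]
    exact margGt_foldr_le α ((A i).sort (· ≤ ·))
      (fun β hβ => hA i hi β ((Finset.mem_sort _).mp hβ)) _
      (by rw [hmassBj j hj]; exact hm)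
  -- mass of w
  have hmw : mass (fun x => ∑ i ∈ s, a i * ∑ j ∈ r, b j * recoSet (A i ∪ B j) v x)
      = mass v := by
    have e1 : mass (fun x => ∑ i ∈ s, a i * ∑ j ∈ r, b j * recoSet (A i ∪ B j) v x)
        = ∑ i ∈ s, a i * mass (fun x => ∑ j ∈ r, b j * recoSet (A i ∪ B j) v x) :=
      mass_sum s a _
    rw [e1]
    have e2 : ∀ i ∈ s, mass (fun x => ∑ j ∈ r, b j * recoSet (A i ∪ B j) v x)
        = ∑ j ∈ r, b j * mass (recoSet (A i ∪ B j) v) := fun i _ => mass_sum r b _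
    calc ∑ i ∈ s, a i * mass (fun x => ∑ j ∈ r, b j * recoSet (A i ∪ B j) v x)
        = ∑ i ∈ s, a i * mass v := by
          apply Finset.sum_congr rfl; intro i hi
          rw [e2 i hi]
          have : ∀ j ∈ r, b j * mass (recoSet (A i ∪ B j) v) = b j * mass v :=
            fun j hj => by rw [hmassAB i hi j hj]
          rw [Finset.sum_congr rfl this, ← Finset.sum_mul, hb, one_mul]
      _ = mass v := by rw [← Finset.sum_mul, ha, one_mul]
  -- margLe of w
  have hlw : margLe α (fun x => ∑ i ∈ s, a i * ∑ j ∈ r, b j * recoSet (A i ∪ B j) v x)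
      = fun x => ∑ i ∈ s, a i * margLe α (recoSet (A i) v) x := by
    have e1 : margLe α (fun x => ∑ i ∈ s, a i * ∑ j ∈ r, b j * recoSet (A i ∪ B j) v x)
        = fun x => ∑ i ∈ s, a i *
            margLe α (fun x' => ∑ j ∈ r, b j * recoSet (A i ∪ B j) v x') x :=
      margLe_sum α s a _
    rw [e1]
    funext x
    apply Finset.sum_congr rfl; intro i hi
    have e2 : margLe α (fun x' => ∑ j ∈ r, b j * recoSet (A i ∪ B j) v x')
        = fun x => ∑ j ∈ r, b j * margLe α (recoSet (A i ∪ B j) v) x :=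
      margLe_sum α r b _
    have e2x : margLe α (fun x' => ∑ j ∈ r, b j * recoSet (A i ∪ B j) v x') x
        = ∑ j ∈ r, b j * margLe α (recoSet (A i ∪ B j) v) x := congrFun e2 x
    have e4 : ∀ j ∈ r, b j * margLe α (recoSet (A i ∪ B j) v) x
        = b j * margLe α (recoSet (A i) v) x := fun j hj => by rw [hLeAB i hi j hj]
    rw [e2x, Finset.sum_congr rfl e4, ← Finset.sum_mul, hb, one_mul]
  -- margGt of w
  have hgw : margGt α (fun x => ∑ i ∈ s, a i * ∑ j ∈ r, b j * recoSet (A i ∪ B j) v x)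
      = fun x => ∑ j ∈ r, b j * margGt α (recoSet (B j) v) x := by
    have e1 : margGt α (fun x => ∑ i ∈ s, a i * ∑ j ∈ r, b j * recoSet (A i ∪ B j) v x)
        = fun x => ∑ i ∈ s, a i *
            margGt α (fun x' => ∑ j ∈ r, b j * recoSet (A i ∪ B j) v x') x :=
      margGt_sum α s a _
    rw [e1]
    funext x
    have e3 : ∀ i ∈ s, a i * margGt α (fun x' => ∑ j ∈ r, b j * recoSet (A i ∪ B j) v x') x
        = a i * ∑ j ∈ r, b j * margGt α (recoSet (B j) v) x := by
      intro i hi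
      have e2 : margGt α (fun x' => ∑ j ∈ r, b j * recoSet (A i ∪ B j) v x')
          = fun x => ∑ j ∈ r, b j * margGt α (recoSet (A i ∪ B j) v) x :=
        margGt_sum α r b _
      have e2x : margGt α (fun x' => ∑ j ∈ r, b j * recoSet (A i ∪ B j) v x') x
          = ∑ j ∈ r, b j * margGt α (recoSet (A i ∪ B j) v) x := congrFun e2 x
      rw [e2x]
      congr 1
      apply Finset.sum_congr rfl; intro j hj
      rw [hGtAB i hi j hj]
    rw [Finset.sum_congr rfl e3, ← Finset.sum_mul, ha, one_mul]
  -- put it together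
  funext x
  rw [reco, hmw, hlw, hgw]
  rw [Finset.sum_mul_sum]
  rw [Finset.mul_sum]
  apply Finset.sum_congr rfl; intro i hi
  rw [Finset.mul_sum, Finset.mul_sum]
  apply Finset.sum_congr rfl; intro j hj
  rw [K1 α v hm (A i) (B j) (hA i hi) (hB j hj)]
  ring
end SL

section main

variable {X : Fin (n+1) → Type*} [∀ i, Fintype (X i)] [∀ i, DecidableEq (X i)]

theorem reco_zero (α : Fin n) : reco α (fun _ : ∀ i, X i => (0:ℝ)) = fun _ => 0 := by
  funext x
  rw [reco]
  simp [margLe, margGt]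

theorem foldr_zero (l : List (Fin n)) :
    l.foldr (fun a ω' => reco a ω') (fun _ : ∀ i, X i => (0:ℝ)) = fun _ => 0 := by
  induction l with
  | nil => rfl
  | cons β l ih => rw [List.foldr_cons, ih, reco_zero]

theorem reco_linearity_aux
    (c : Finset (Fin n) → Finset (Fin n) → ℝ → ℝ)
    (hfact : ∀ L₁ L₂ : Finset (Fin n), Disjoint L₁ L₂ → L₁ ∪ L₂ = Finset.univ →
      ∀ (G : Finset (Fin n)) (t : ℝ), 0 ≤ t →
        c Finset.univ G t = c L₁ (G ∩ L₁) t * c L₂ (G ∩ L₂) t)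
    (hnorm : ∀ (L : Finset (Fin n)) (t : ℝ), 0 ≤ t → ∑ K ∈ L.powerset, c L K t = 1)
    (v : (∀ i, X i) → ℝ) (hm : mass v ≠ 0)
    (H : Finset (Fin n)) (t : ℝ) (ht : 0 ≤ t) :
    recoSet H (fun x => ∑ G ∈ (Finset.univ : Finset (Fin n)).powerset,
        c Finset.univ G t * recoSet G v x)
      = fun x => ∑ G ∈ (Finset.univ : Finset (Fin n)).powerset,
        c Finset.univ G t * recoSet (G ∪ H) v x := by
  induction H using Finset.strongInductionOn with
  | _ H IH =>
  by_cases hH : H = ∅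
  · subst hH
    have hempty : ∀ w : (∀ i, X i) → ℝ, recoSet (∅ : Finset (Fin n)) w = w := by
      intro w
      rw [recoSet, Finset.sort_empty]
      rfl
    rw [hempty]
    simp only [Finset.union_empty]
  · have hne : H.Nonempty := Finset.nonempty_of_ne_empty hH
    set h1 := H.min' hne with hh1
    have hmem : h1 ∈ H := H.min'_mem hne
    have hH0lt : ∀ b ∈ H.erase h1, (h1 : ℕ) < (b : ℕ) := by
      intro b hb
      rcases Finset.mem_erase.mp hb with ⟨hne', hbH⟩
      exact lt_of_le_of_ne (Fin.le_def.mp (H.min'_le b hbH))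
        (fun hb2 => hne' (Fin.val_injective hb2).symm)
    have hHeq : H = {h1} ∪ H.erase h1 := by
      rw [← Finset.insert_eq, Finset.insert_erase hmem]
    have hsort : H.sort (· ≤ ·) = h1 :: (H.erase h1).sort (· ≤ ·) := by
      conv_lhs => rw [hHeq]
      rw [sort_union_split {h1} (H.erase h1) (by
        intro a ha b hb
        rw [Finset.mem_singleton] at ha
        subst ha
        exact hH0lt b hb), Finset.sort_singleton]
      rfl
    have hstep : ∀ w : (∀ i, X i) → ℝ, recoSet H w = reco h1 (recoSet (H.erase h1) w) := by
      intro w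
      rw [recoSet, hsort]
      rfl
    rw [hstep, IH (H.erase h1) (Finset.erase_ssubset hmem)]
    set L1 := Finset.univ.filter (fun β : Fin n => (β : ℕ) ≤ (h1 : ℕ)) with hL1
    set L2 := Finset.univ.filter (fun β : Fin n => ¬ (β : ℕ) ≤ (h1 : ℕ)) with hL2
    have hd : Disjoint L1 L2 := by
      rw [Finset.disjoint_left]
      intro a ha hb
      exact (Finset.mem_filter.mp hb).2 (Finset.mem_filter.mp ha).2
    have hu : L1 ∪ L2 = Finset.univ := Finset.filter_union_filter_not_eq _ _
    have hI1 : ∀ G1 G2 : Finset (Fin n), G1 ⊆ L1 → G2 ⊆ L2 → (G1 ∪ G2) ∩ L1 = G1 := by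
      intro G1 G2 hG1 hG2
      ext a
      simp only [Finset.mem_inter, Finset.mem_union]
      constructor
      · rintro ⟨ha | ha, haL⟩
        · exact ha
        · exact absurd haL (Finset.disjoint_right.mp hd (hG2 ha))
      · intro ha; exact ⟨Or.inl ha, hG1 ha⟩
    have hI2 : ∀ G1 G2 : Finset (Fin n), G1 ⊆ L1 → G2 ⊆ L2 → (G1 ∪ G2) ∩ L2 = G2 := by
      intro G1 G2 hG1 hG2
      ext a
      simp only [Finset.mem_inter, Finset.mem_union]
      constructor
      · rintro ⟨ha | ha, haL⟩
        · exact absurd haL (Finset.disjoint_left.mp hd (hG1 ha))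
        · exact ha
      · intro ha; exact ⟨Or.inr ha, hG2 ha⟩
    have hsplit : ∀ F : Finset (Fin n) → ℝ,
        ∑ G ∈ Finset.univ.powerset, c Finset.univ G t * F G
        = ∑ G1 ∈ L1.powerset, c L1 G1 t * ∑ G2 ∈ L2.powerset, c L2 G2 t * F (G1 ∪ G2) := by
      intro F
      calc ∑ G ∈ Finset.univ.powerset, c Finset.univ G t * F G
          = ∑ G ∈ (L1 ∪ L2).powerset, c Finset.univ G t * F G := by rw [hu]
        _ = ∑ G1 ∈ L1.powerset, ∑ G2 ∈ L2.powerset,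
            c Finset.univ (G1 ∪ G2) t * F (G1 ∪ G2) :=
          sum_powerset_split L1 L2 hd (fun G => c Finset.univ G t * F G)
        _ = ∑ G1 ∈ L1.powerset, c L1 G1 t * ∑ G2 ∈ L2.powerset, c L2 G2 t * F (G1 ∪ G2) := by
          apply Finset.sum_congr rfl; intro G1 hG1
          rw [Finset.mul_sum]
          apply Finset.sum_congr rfl; intro G2 hG2
          rw [hfact L1 L2 hd hu (G1 ∪ G2) t ht,
            hI1 G1 G2 (Finset.mem_powerset.mp hG1) (Finset.mem_powerset.mp hG2),
            hI2 G1 G2 (Finset.mem_powerset.mp hG1) (Finset.mem_powerset.mp hG2), mul_assoc]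
    have hfun1 : (fun x => ∑ G ∈ Finset.univ.powerset,
          c Finset.univ G t * recoSet (G ∪ H.erase h1) v x)
        = fun x => ∑ G1 ∈ L1.powerset, c L1 G1 t * ∑ G2 ∈ L2.powerset, c L2 G2 t *
            recoSet (G1 ∪ (G2 ∪ H.erase h1)) v x := by
      funext x
      have e := hsplit (fun G => recoSet (G ∪ H.erase h1) v x)
      rw [show (∑ G ∈ Finset.univ.powerset, c Finset.univ G t * recoSet (G ∪ H.erase h1) v x)
          = ∑ G1 ∈ L1.powerset, c L1 G1 t * ∑ G2 ∈ L2.powerset, c L2 G2 t *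
            recoSet ((G1 ∪ G2) ∪ H.erase h1) v x from e]
      apply Finset.sum_congr rfl; intro G1 _
      congr 1
      apply Finset.sum_congr rfl; intro G2 _
      rw [Finset.union_assoc]
    rw [hfun1]
    have hA' : ∀ G1 ∈ L1.powerset, ∀ β ∈ G1, (β : ℕ) ≤ (h1 : ℕ) := by
      intro G1 hG1 β hβ
      exact (Finset.mem_filter.mp (Finset.mem_powerset.mp hG1 hβ)).2
    have hB' : ∀ G2 ∈ L2.powerset, ∀ β ∈ G2 ∪ H.erase h1, (h1 : ℕ) < (β : ℕ) := by
      intro G2 hG2 β hβ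
      rcases Finset.mem_union.mp hβ with hβ | hβ
      · exact Nat.lt_of_not_le (Finset.mem_filter.mp (Finset.mem_powerset.mp hG2 hβ)).2
      · exact hH0lt β hβ
    have hSL : reco h1 (fun x => ∑ G1 ∈ L1.powerset, c L1 G1 t * ∑ G2 ∈ L2.powerset,
          c L2 G2 t * recoSet (G1 ∪ (G2 ∪ H.erase h1)) v x)
        = fun x => ∑ G1 ∈ L1.powerset, c L1 G1 t * ∑ G2 ∈ L2.powerset,
          c L2 G2 t * recoSet (G1 ∪ (G2 ∪ H.erase h1) ∪ {h1}) v x :=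
      SL h1 v hm L1.powerset L2.powerset (fun G1 => c L1 G1 t) (fun G2 => c L2 G2 t)
        (fun G1 => G1) (fun G2 => G2 ∪ H.erase h1) hA' hB' (hnorm L1 t ht) (hnorm L2 t ht)
    rw [hSL]
    have hfun2 : (fun x => ∑ G ∈ Finset.univ.powerset,
          c Finset.univ G t * recoSet (G ∪ H) v x)
        = fun x => ∑ G1 ∈ L1.powerset, c L1 G1 t * ∑ G2 ∈ L2.powerset, c L2 G2 t *
            recoSet (G1 ∪ (G2 ∪ H.erase h1) ∪ {h1}) v x := by
      funext x
      have e := hsplit (fun G => recoSet (G ∪ H) v x)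
      rw [show (∑ G ∈ Finset.univ.powerset, c Finset.univ G t * recoSet (G ∪ H) v x)
          = ∑ G1 ∈ L1.powerset, c L1 G1 t * ∑ G2 ∈ L2.powerset, c L2 G2 t *
            recoSet ((G1 ∪ G2) ∪ H) v x from e]
      apply Finset.sum_congr rfl; intro G1 _
      congr 1
      apply Finset.sum_congr rfl; intro G2 _
      have hsets : (G1 ∪ G2) ∪ H = G1 ∪ (G2 ∪ H.erase h1) ∪ {h1} := by
        conv_lhs => rw [hHeq]
        ext a
        simp only [Finset.mem_union, Finset.mem_singleton]
        tauto
      rw [hsets]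
    rw [hfun2]

end main

theorem reco_linearity {X : Fin (n+1) → Type*} [∀ i, Fintype (X i)]
    [∀ i, DecidableEq (X i)] [∀ i, Nonempty (X i)]
    (c : Finset (Fin n) → Finset (Fin n) → ℝ → ℝ)
    (hnonneg : ∀ (L : Finset (Fin n)) (G : Finset (Fin n)) (t : ℝ), 0 ≤ t → G ⊆ L → 0 ≤ c L G t)
    (hfact : ∀ L₁ L₂ : Finset (Fin n), Disjoint L₁ L₂ → L₁ ∪ L₂ = Finset.univ →
      ∀ (G : Finset (Fin n)) (t : ℝ), 0 ≤ t →
        c Finset.univ G t = c L₁ (G ∩ L₁) t * c L₂ (G ∩ L₂) t)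
    (hnorm : ∀ (L : Finset (Fin n)) (t : ℝ), 0 ≤ t → ∑ H ∈ L.powerset, c L H t = 1)
    (v : (∀ i, X i) → ℝ) (hv : ∀ x, 0 ≤ v x)
    (H : Finset (Fin n)) (t : ℝ) (ht : 0 ≤ t) :
    recoSet H (fun x => ∑ G ∈ (Finset.univ : Finset (Fin n)).powerset,
        c Finset.univ G t * recoSet G v x)
      = fun x => ∑ G ∈ (Finset.univ : Finset (Fin n)).powerset,
        c Finset.univ G t * recoSet (G ∪ H) v x := by
  by_cases hm : mass v = 0
  · have hv0 : v = fun _ => 0 := by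
      funext x
      simp only [mass] at hm
      exact (Finset.sum_eq_zero_iff_of_nonneg (fun y _ => hv y)).mp hm x (Finset.mem_univ x)
    have hz : ∀ G : Finset (Fin n), recoSet G (fun _ : ∀ i, X i => (0:ℝ)) = fun _ => 0 :=
      fun G => foldr_zero _
    rw [hv0]
    simp only [hz, mul_zero, Finset.sum_const_zero]
  · exact reco_linearity_aux c hfact hnorm v hm H t ht
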